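/- Let 0 < q < 1, s ∈ ℝ and n ≥ 1. Then H_{n+1}(x,s|q^{-1}) = x·H_n(x, s q^{-2}|q^{-1}) - s·q^{1-n}·{n}_q·H_{n-1}(x, s q^{-2}|q^{-1}) as polynomials in x. -/

import Mathlib

/-- The q-number `{n}_q = 1 + q + ⋯ + q^{n-1}`. -/
noncomputable def qNum (q : ℝ) (n : ℕ) : ℝ := ∑ k ∈ Finset.range n, q ^ k

/-- The q-factorial `{n}_q! = Π_{k=1}^n {k}_q`. -/
noncomputable def qFact (q : ℝ) (n : ℕ) : ℝ := ∏ k ∈ Finset.range n, qNum q (k + 1)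

/-- The even q-double factorial `{2k}_q!! = Π_{l=1}^k {2l}_q`. -/
noncomputable def qDoubleFact (q : ℝ) (k : ℕ) : ℝ := ∏ l ∈ Finset.range k, qNum q (2 * (l + 1))

/-- The coefficient `c_{n,k}(q) = (-1)^k q^{k(k-1)} {n}_q!/({n-2k}_q!·{2k}_q!!)`. -/
noncomputable def qHermiteCoeff (q : ℝ) (n k : ℕ) : ℝ :=
  (-1 : ℝ) ^ k * q ^ (k * (k - 1)) * qFact q n / (qFact q (n - 2 * k) * qDoubleFact q k)

/-- The `q⁻¹`-Hermite polynomial `H_n(x,s|q⁻¹) = Σ_{k=0}^{⌊n/2⌋} c_{n,k}(q⁻¹) s^k x^{n-2k}`. -/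
noncomputable def qInvHermite (q s : ℝ) (n : ℕ) : Polynomial ℝ :=
  ∑ k ∈ Finset.range (n / 2 + 1),
    Polynomial.C (qHermiteCoeff (1 / q) n k * s ^ k) * Polynomial.X ^ (n - 2 * k)

lemma qNum_pos {q : ℝ} (hq : 0 < q) {m : ℕ} (hm : 1 ≤ m) : 0 < qNum q m := by
  unfold qNum
  apply Finset.sum_pos (fun i _ => pow_pos hq i)
  exact Finset.nonempty_range_iff.mpr (by omega)

lemma qFact_pos {q : ℝ} (hq : 0 < q) (n : ℕ) : 0 < qFact q n :=
  Finset.prod_pos (fun i _ => qNum_pos hq (by omega))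

lemma qDoubleFact_pos {q : ℝ} (hq : 0 < q) (k : ℕ) : 0 < qDoubleFact q k :=
  Finset.prod_pos (fun i _ => qNum_pos hq (by omega))

lemma qNum_add (q : ℝ) (a b : ℕ) : qNum q (a + b) = qNum q a + q ^ a * qNum q b := by
  unfold qNum
  rw [Finset.sum_range_add, Finset.mul_sum]
  congr 1
  exact Finset.sum_congr rfl fun i _ => by rw [pow_add]

lemma qFact_succ (q : ℝ) (n : ℕ) : qFact q (n + 1) = qFact q n * qNum q (n + 1) :=
  Finset.prod_range_succ _ n

lemma qDoubleFact_succ (q : ℝ) (k : ℕ) :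
    qDoubleFact q (k + 1) = qDoubleFact q k * qNum q (2 * k + 2) := by
  unfold qDoubleFact
  rw [Finset.prod_range_succ]
  norm_num [Nat.mul_add]

lemma qNum_one_div {q : ℝ} (hq : q ≠ 0) (m : ℕ) :
    qNum q (m + 1) = q ^ m * qNum (1 / q) (m + 1) := by
  unfold qNum
  rw [Finset.mul_sum]
  rw [← Finset.sum_range_reflect (fun k => q ^ k) (m + 1)]
  apply Finset.sum_congr rfl
  intro i hi
  simp only [Finset.mem_range] at hi
  have hi' : i ≤ m := by omega
  rw [div_pow, one_pow]
  rw [show m + 1 - 1 - i = m - i from by omega]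
  field_simp
  rw [← pow_add]
  congr 1
  omega


lemma qHermiteCoeff_zero {q : ℝ} (hq : 0 < q) (n : ℕ) : qHermiteCoeff q n 0 = 1 := by
  unfold qHermiteCoeff qDoubleFact
  simp [div_self (ne_of_gt (qFact_pos hq n))]

lemma qFact_eq (q : ℝ) {a b : ℕ} (h : a = b + 1) :
    qFact q a = qFact q b * qNum q a := by
  subst h; exact qFact_succ q b

lemma key (q : ℝ) (hq0 : 0 < q) (m j : ℕ) :
    qHermiteCoeff (1/q) (m+2*j+3) (j+1) =
      (q^(2*j+2))⁻¹ * qHermiteCoeff (1/q) (m+2*j+2) (j+1)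
      - (q / q^(m+2*j+2)) * (q^(2*j))⁻¹ * qNum q (m+2*j+2) *
          qHermiteCoeff (1/q) (m+2*j+1) j := by
  have hq : q ≠ 0 := ne_of_gt hq0
  have hp : (0:ℝ) < 1/q := by positivity
  unfold qHermiteCoeff
  rw [show m+2*j+3 - 2*(j+1) = m+1 from by omega,
      show m+2*j+2 - 2*(j+1) = m from by omega,
      show m+2*j+1 - 2*j = m+1 from by omega,
      show (j+1) * ((j+1) - 1) = j*(j-1) + 2*j from by cases j <;> simp <;> ring]
  have e1 : qFact (1/q) (m+2*j+3) = qFact (1/q) (m+2*j+1) * qNum (1/q) (m+2*j+2) * qNum (1/q) (m+2*j+3) := by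
    rw [qFact_eq (1/q) (show m+2*j+3 = (m+2*j+2) + 1 by omega),
        qFact_eq (1/q) (show m+2*j+2 = (m+2*j+1) + 1 by omega)]
  have e2 : qFact (1/q) (m+2*j+2) = qFact (1/q) (m+2*j+1) * qNum (1/q) (m+2*j+2) :=
    qFact_eq (1/q) (show m+2*j+2 = (m+2*j+1) + 1 by omega)
  have e3 : qFact (1/q) (m+1) = qFact (1/q) m * qNum (1/q) (m+1) :=
    qFact_eq (1/q) rfl
  have e4 : qNum q (m+2*j+2) = q^(m+2*j+1) * qNum (1/q) (m+2*j+2) := by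
    have := qNum_one_div hq (m+2*j+1)
    rwa [show m+2*j+1+1 = m+2*j+2 from by omega] at this
  have e5 : qNum (1/q) (m+2*j+3) = qNum (1/q) (2*j+2) + (1/q)^(2*j+2) * qNum (1/q) (m+1) := by
    have := qNum_add (1/q) (2*j+2) (m+1)
    rwa [show 2*j+2+(m+1) = m+2*j+3 from by omega] at this
  rw [e1, e2, e3, e4, e5, qDoubleFact_succ]
  have hFm := ne_of_gt (qFact_pos hp m)
  have hF1 := ne_of_gt (qFact_pos hp (m+2*j+1))
  have hDj := ne_of_gt (qDoubleFact_pos hp j)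
  have hN2 := ne_of_gt (qNum_pos hp (show 1 ≤ 2*j+2 by omega))
  have hNm := ne_of_gt (qNum_pos hp (show 1 ≤ m+1 by omega))
  have hNmid := ne_of_gt (qNum_pos hp (show 1 ≤ m+2*j+2 by omega))
  have hq' : (1:ℝ)/q ≠ 0 := ne_of_gt hp
  field_simp
  simp only [div_pow, one_pow, pow_add]
  field_simp
  ring

lemma qFact_zero (q : ℝ) : qFact q 0 = 1 := by simp [qFact]

lemma key_top (q : ℝ) (hq0 : 0 < q) (m : ℕ) :
    qHermiteCoeff (1/q) (2*m+2) (m+1) =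
      - ((q / q^(2*m+1)) * (q^(2*m))⁻¹ * qNum q (2*m+1) * qHermiteCoeff (1/q) (2*m) m) := by
  have hq : q ≠ 0 := ne_of_gt hq0
  have hp : (0:ℝ) < 1/q := by positivity
  unfold qHermiteCoeff
  rw [show 2*m+2 - 2*(m+1) = 0 from by omega,
      show 2*m - 2*m = 0 from by omega,
      show (m+1) * ((m+1) - 1) = m*(m-1) + 2*m from by cases m <;> simp <;> ring,
      qFact_zero]
  have e1 : qFact (1/q) (2*m+2) = qFact (1/q) (2*m) * qNum (1/q) (2*m+1) * qNum (1/q) (2*m+2) := by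
    rw [qFact_eq (1/q) (show 2*m+2 = (2*m+1) + 1 by omega),
        qFact_eq (1/q) (show 2*m+1 = (2*m) + 1 by omega)]
  have e4 : qNum q (2*m+1) = q^(2*m) * qNum (1/q) (2*m+1) := by
    have := qNum_one_div hq (2*m)
    rwa [show 2*m+1 = 2*m+1 from rfl] at this
  rw [e1, e4, qDoubleFact_succ]
  have hF := ne_of_gt (qFact_pos hp (2*m))
  have hDm := ne_of_gt (qDoubleFact_pos hp m)
  have hN2 := ne_of_gt (qNum_pos hp (show 1 ≤ 2*m+2 by omega))
  have hN1 := ne_of_gt (qNum_pos hp (show 1 ≤ 2*m+1 by omega))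
  have hq' : (1:ℝ)/q ≠ 0 := ne_of_gt hp
  field_simp
  simp only [div_pow, one_pow, pow_add]
  field_simp

/-- Recursion for the `q⁻¹`-Hermite polynomials:
`H_{n+1}(x,s|q⁻¹) = x·H_n(x,sq⁻²|q⁻¹) - s·q^{1-n}·{n}_q·H_{n-1}(x,sq⁻²|q⁻¹)`. -/
theorem qInvHermite_recursion (q : ℝ) (hq0 : 0 < q) (hq1 : q < 1) (s : ℝ) (n : ℕ) (hn : 1 ≤ n) :
    qInvHermite q s (n + 1) =
      Polynomial.X * qInvHermite q (s * q ^ (-2 : ℤ)) n -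
        Polynomial.C (s * q ^ ((1 : ℤ) - (n : ℤ)) * qNum q n) *
          qInvHermite q (s * q ^ (-2 : ℤ)) (n - 1) := by
  have hq : q ≠ 0 := ne_of_gt hq0
  have hp : (0:ℝ) < 1/q := by positivity
  have ht : q ^ (-2:ℤ) = (q^(2:ℕ))⁻¹ := by
    rw [show (-2:ℤ) = -((2:ℕ):ℤ) from by norm_num, zpow_neg, zpow_natCast]
  have hb : q ^ ((1:ℤ) - (n:ℤ)) = q / q^n := by
    rw [zpow_sub₀ hq, zpow_one, zpow_natCast]
  rw [ht, hb]
  unfold qInvHermite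
  rw [Finset.mul_sum, Finset.mul_sum]
  rcases Nat.even_or_odd n with ⟨m, hm⟩ | ⟨m, hm⟩
  · -- even case, n = m + m, m ≥ 1
    subst hm
    have hm1 : 1 ≤ m := by omega
    rw [show (m+m+1)/2 + 1 = m+1 from by omega,
        show (m+m)/2 + 1 = m+1 from by omega,
        show (m+m-1)/2 + 1 = m from by omega]
    have hA : ∑ k ∈ Finset.range (m+1),
        Polynomial.X * (Polynomial.C (qHermiteCoeff (1/q) (m+m) k * (s * (q^(2:ℕ))⁻¹)^k)
          * Polynomial.X ^ (m+m - 2*k)) =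
        ∑ k ∈ Finset.range (m+1),
        Polynomial.C (qHermiteCoeff (1/q) (m+m) k * (s * (q^(2:ℕ))⁻¹)^k)
          * Polynomial.X ^ (m+m+1 - 2*k) := by
      refine Finset.sum_congr rfl fun k hk => ?_
      have hk' : k ≤ m := by simpa [Nat.lt_succ_iff] using hk
      rw [show m+m+1 - 2*k = (m+m-2*k) + 1 from by omega, pow_succ]
      ring
    rw [hA]
    have hB : ∑ k ∈ Finset.range m,
        Polynomial.C (s * (q / q^(m+m)) * qNum q (m+m)) *
          (Polynomial.C (qHermiteCoeff (1/q) (m+m-1) k * (s * (q^(2:ℕ))⁻¹)^k)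
            * Polynomial.X ^ (m+m-1 - 2*k)) =
        ∑ k ∈ Finset.range m,
        Polynomial.C ((s * (q / q^(m+m)) * qNum q (m+m)) *
            (qHermiteCoeff (1/q) (m+m-1) k * (s * (q^(2:ℕ))⁻¹)^k))
          * Polynomial.X ^ (m+m+1 - 2*(k+1)) := by
      refine Finset.sum_congr rfl fun k hk => ?_
      have hk' : k < m := by simpa using hk
      rw [show m+m+1 - 2*(k+1) = m+m-1-2*k from by omega, ← mul_assoc, ← Polynomial.C_mul]
    rw [hB]
    rw [Finset.sum_range_succ' (fun k => Polynomial.C (qHermiteCoeff (1/q) (m+m+1) k * s^k)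
          * Polynomial.X ^ (m+m+1 - 2*k)) m,
        Finset.sum_range_succ' (fun k => Polynomial.C (qHermiteCoeff (1/q) (m+m) k * (s * (q^(2:ℕ))⁻¹)^k)
          * Polynomial.X ^ (m+m+1 - 2*k)) m]
    have h00 : (Polynomial.C (qHermiteCoeff (1/q) (m+m+1) 0 * s^0)
          * Polynomial.X ^ (m+m+1 - 2*0) : Polynomial ℝ) =
        Polynomial.C (qHermiteCoeff (1/q) (m+m) 0 * (s * (q^(2:ℕ))⁻¹)^0)
          * Polynomial.X ^ (m+m+1 - 2*0) := by
      rw [qHermiteCoeff_zero hp, qHermiteCoeff_zero hp]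
      norm_num
    rw [h00]
    have hMain : ∑ i ∈ Finset.range m,
        (Polynomial.C (qHermiteCoeff (1/q) (m+m+1) (i+1) * s^(i+1))
          * Polynomial.X ^ (m+m+1 - 2*(i+1)) : Polynomial ℝ) =
        ∑ i ∈ Finset.range m,
        (Polynomial.C (qHermiteCoeff (1/q) (m+m) (i+1) * (s * (q^(2:ℕ))⁻¹)^(i+1))
          * Polynomial.X ^ (m+m+1 - 2*(i+1))
        - Polynomial.C ((s * (q / q^(m+m)) * qNum q (m+m)) *
            (qHermiteCoeff (1/q) (m+m-1) i * (s * (q^(2:ℕ))⁻¹)^i))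
          * Polynomial.X ^ (m+m+1 - 2*(i+1))) := by
      refine Finset.sum_congr rfl fun i hi => ?_
      have hi' : i < m := by simpa using hi
      rw [← sub_mul, ← Polynomial.C_sub]
      congr 1
      have hk := key q hq0 (m+m-2*i-2) i
      rw [show m+m-2*i-2+2*i+3 = m+m+1 from by omega,
          show m+m-2*i-2+2*i+2 = m+m from by omega,
          show m+m-2*i-2+2*i+1 = m+m-1 from by omega] at hk
      rw [hk]
      field_simp
      simp only [div_pow, one_pow, pow_add]
      field_simp
      ring
    rw [hMain, Finset.sum_sub_distrib]
    ring
  · -- odd case, n = 2*m+1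
    subst hm
    rw [show (2*m+1+1)/2 + 1 = m+2 from by omega,
        show (2*m+1)/2 + 1 = m+1 from by omega,
        show (2*m+1-1)/2 + 1 = m+1 from by omega]
    have hA : ∑ k ∈ Finset.range (m+1),
        Polynomial.X * (Polynomial.C (qHermiteCoeff (1/q) (2*m+1) k * (s * (q^(2:ℕ))⁻¹)^k)
          * Polynomial.X ^ (2*m+1 - 2*k)) =
        ∑ k ∈ Finset.range (m+1),
        Polynomial.C (qHermiteCoeff (1/q) (2*m+1) k * (s * (q^(2:ℕ))⁻¹)^k)
          * Polynomial.X ^ (2*m+1+1 - 2*k) := by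
      refine Finset.sum_congr rfl fun k hk => ?_
      have hk' : k ≤ m := by simpa [Nat.lt_succ_iff] using hk
      rw [show 2*m+1+1 - 2*k = (2*m+1-2*k) + 1 from by omega, pow_succ]
      ring
    rw [hA]
    have hB : ∑ k ∈ Finset.range (m+1),
        Polynomial.C (s * (q / q^(2*m+1)) * qNum q (2*m+1)) *
          (Polynomial.C (qHermiteCoeff (1/q) (2*m+1-1) k * (s * (q^(2:ℕ))⁻¹)^k)
            * Polynomial.X ^ (2*m+1-1 - 2*k)) =
        ∑ k ∈ Finset.range (m+1),
        Polynomial.C ((s * (q / q^(2*m+1)) * qNum q (2*m+1)) *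
            (qHermiteCoeff (1/q) (2*m) k * (s * (q^(2:ℕ))⁻¹)^k))
          * Polynomial.X ^ (2*m+1+1 - 2*(k+1)) := by
      refine Finset.sum_congr rfl fun k hk => ?_
      have hk' : k ≤ m := by simpa [Nat.lt_succ_iff] using hk
      rw [show 2*m+1+1 - 2*(k+1) = 2*m+1-1-2*k from by omega,
          show 2*m+1-1 = 2*m from by omega, ← mul_assoc, ← Polynomial.C_mul]
    rw [hB]
    rw [Finset.sum_range_succ' (fun k => Polynomial.C (qHermiteCoeff (1/q) (2*m+1+1) k * s^k)
          * Polynomial.X ^ (2*m+1+1 - 2*k)) (m+1),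
        Finset.sum_range_succ (fun i => Polynomial.C (qHermiteCoeff (1/q) (2*m+1+1) (i+1) * s^(i+1))
          * Polynomial.X ^ (2*m+1+1 - 2*(i+1))) m,
        Finset.sum_range_succ' (fun k => Polynomial.C (qHermiteCoeff (1/q) (2*m+1) k * (s * (q^(2:ℕ))⁻¹)^k)
          * Polynomial.X ^ (2*m+1+1 - 2*k)) m,
        Finset.sum_range_succ (fun k => Polynomial.C ((s * (q / q^(2*m+1)) * qNum q (2*m+1)) *
            (qHermiteCoeff (1/q) (2*m) k * (s * (q^(2:ℕ))⁻¹)^k))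
          * Polynomial.X ^ (2*m+1+1 - 2*(k+1))) m]
    have h00 : (Polynomial.C (qHermiteCoeff (1/q) (2*m+1+1) 0 * s^0)
          * Polynomial.X ^ (2*m+1+1 - 2*0) : Polynomial ℝ) =
        Polynomial.C (qHermiteCoeff (1/q) (2*m+1) 0 * (s * (q^(2:ℕ))⁻¹)^0)
          * Polynomial.X ^ (2*m+1+1 - 2*0) := by
      rw [qHermiteCoeff_zero hp, qHermiteCoeff_zero hp]
      norm_num
    have hTop : (Polynomial.C (qHermiteCoeff (1/q) (2*m+1+1) (m+1) * s^(m+1))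
          * Polynomial.X ^ (2*m+1+1 - 2*(m+1)) : Polynomial ℝ) =
        - (Polynomial.C ((s * (q / q^(2*m+1)) * qNum q (2*m+1)) *
            (qHermiteCoeff (1/q) (2*m) m * (s * (q^(2:ℕ))⁻¹)^m))
          * Polynomial.X ^ (2*m+1+1 - 2*(m+1))) := by
      rw [← neg_mul, ← Polynomial.C_neg]
      congr 1
      have hk := key_top q hq0 m
      rw [show 2*m+2 = 2*m+1+1 from by omega] at hk
      rw [hk]
      field_simp
      simp only [div_pow, one_pow, pow_add]
      field_simp
      ring
    have hMain : ∑ i ∈ Finset.range m,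
        (Polynomial.C (qHermiteCoeff (1/q) (2*m+1+1) (i+1) * s^(i+1))
          * Polynomial.X ^ (2*m+1+1 - 2*(i+1)) : Polynomial ℝ) =
        ∑ i ∈ Finset.range m,
        (Polynomial.C (qHermiteCoeff (1/q) (2*m+1) (i+1) * (s * (q^(2:ℕ))⁻¹)^(i+1))
          * Polynomial.X ^ (2*m+1+1 - 2*(i+1))
        - Polynomial.C ((s * (q / q^(2*m+1)) * qNum q (2*m+1)) *
            (qHermiteCoeff (1/q) (2*m) i * (s * (q^(2:ℕ))⁻¹)^i))
          * Polynomial.X ^ (2*m+1+1 - 2*(i+1))) := by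
      refine Finset.sum_congr rfl fun i hi => ?_
      have hi' : i < m := by simpa using hi
      rw [← sub_mul, ← Polynomial.C_sub]
      congr 1
      have hk := key q hq0 (2*m-2*i-1) i
      rw [show 2*m-2*i-1+2*i+3 = 2*m+1+1 from by omega,
          show 2*m-2*i-1+2*i+2 = 2*m+1 from by omega,
          show 2*m-2*i-1+2*i+1 = 2*m from by omega] at hk
      rw [hk]
      field_simp
      simp only [div_pow, one_pow, pow_add]
      field_simp
      ring
    rw [hMain, Finset.sum_sub_distrib, h00, hTop]
    ring
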